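/- Let b > 1, x > 0, c ≥ 0, and k ≥ 1. For any nonnegative reals y₁,…,y_k with ∑_{i=1}^k y_i = x, the maximum over i of (b·y_i + ∑_{j>i} y_j + c) is at least x / (1 - ((b-1)/b)^k) + c, with equality if and only if y_i = x·(b-1)^{k-i}·b^{i-1}/(b^k - (b-1)^k) for all i. -/

import Mathlib

open Finset

private lemma icc_split (y : ℕ → ℝ) {i k : ℕ} (h : i ≤ k) :
    ∑ j ∈ Icc i k, y j = y i + ∑ j ∈ Icc (i+1) k, y j := by
  rw [Finset.Icc_eq_cons_Ioc h, Finset.sum_cons, ← Finset.Icc_add_one_left_eq_Ioc]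

private lemma wsum (b : ℝ) (hb : 1 < b) (j : ℕ) :
    ∑ i ∈ Icc 1 j, ((b-1)/b)^(i-1) = b * (1 - ((b-1)/b)^j) := by
  have hb0 : (0:ℝ) < b := lt_trans one_pos hb
  have hbr : b * ((b-1)/b) = b - 1 := by field_simp
  induction j with
  | zero => simp
  | succ j ih =>
    rw [Finset.sum_Icc_succ_top (by omega), ih]
    simp only [Nat.add_sub_cancel]
    rw [pow_succ]
    linear_combination ((b-1)/b)^j * hbr

private lemma key_identity (b : ℝ) (hb : 1 < b) (k : ℕ) (y : ℕ → ℝ) :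
    ∑ i ∈ Icc 1 k, ((b-1)/b)^(i-1) * ((b-1) * y i + ∑ j ∈ Icc i k, y j)
      = b * ∑ j ∈ Icc 1 k, y j := by
  have hb0 : (0:ℝ) < b := lt_trans one_pos hb
  have hbr : b * ((b-1)/b) = b - 1 := by field_simp
  have swap : ∑ i ∈ Icc 1 k, ∑ j ∈ Icc i k, ((b-1)/b)^(i-1) * y j
      = ∑ j ∈ Icc 1 k, ∑ i ∈ Icc 1 j, ((b-1)/b)^(i-1) * y j :=
    Finset.sum_comm' (by intro i j; simp only [mem_Icc]; omega)
  calc ∑ i ∈ Icc 1 k, ((b-1)/b)^(i-1) * ((b-1) * y i + ∑ j ∈ Icc i k, y j)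
      = ∑ i ∈ Icc 1 k, ((b-1) * (((b-1)/b)^(i-1) * y i))
        + ∑ i ∈ Icc 1 k, ∑ j ∈ Icc i k, ((b-1)/b)^(i-1) * y j := by
        rw [← Finset.sum_add_distrib]
        refine Finset.sum_congr rfl fun i _ => ?_
        rw [mul_add, Finset.mul_sum]
        congr 1
        ring
    _ = ∑ j ∈ Icc 1 k, ((b-1) * (((b-1)/b)^(j-1) * y j)
        + (∑ i ∈ Icc 1 j, ((b-1)/b)^(i-1)) * y j) := by
        rw [swap, ← Finset.sum_add_distrib]
        refine Finset.sum_congr rfl fun j _ => ?_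
        rw [Finset.sum_mul]
    _ = ∑ j ∈ Icc 1 k, b * y j := by
        refine Finset.sum_congr rfl fun j hj => ?_
        obtain ⟨m, rfl⟩ : ∃ m, j = m + 1 := ⟨j - 1, by
          have := (mem_Icc.mp hj).1; omega⟩
        rw [wsum b hb]
        simp only [Nat.add_sub_cancel]
        rw [pow_succ]
        linear_combination (-(((b-1)/b)^m * y (m+1))) * hbr
    _ = b * ∑ j ∈ Icc 1 k, y j := by rw [Finset.mul_sum]

private lemma telescope (b : ℝ) {i k : ℕ} (hik : i ≤ k) :
    ∑ j ∈ Icc (i+1) k, b^(j-1) * (b-1)^(k-j) = b^k - b^i * (b-1)^(k-i) := by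
  rw [← Finset.Ico_add_one_right_eq_Icc, Finset.sum_Ico_eq_sum_range]
  have h1 : k + 1 - (i+1) = k - i := by omega
  rw [h1]
  have hstep : ∀ t ∈ Finset.range (k-i),
      b^(i+1+t-1) * (b-1)^(k-(i+1+t))
        = (fun s => b^(i+s) * (b-1)^(k-(i+s))) (t+1)
          - (fun s => b^(i+s) * (b-1)^(k-(i+s))) t := by
    intro t ht
    simp only [Finset.mem_range] at ht
    show b^(i+1+t-1) * (b-1)^(k-(i+1+t))
        = b^(i+(t+1)) * (b-1)^(k-(i+(t+1))) - b^(i+t) * (b-1)^(k-(i+t))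
    have e1 : i+1+t-1 = i+t := by omega
    obtain ⟨d, hd⟩ : ∃ d, k - (i+t) = d + 1 := ⟨k - (i+t) - 1, by omega⟩
    have e2 : k-(i+1+t) = d := by omega
    have e3 : k-(i+(t+1)) = d := by omega
    have e4 : i+(t+1) = (i+t)+1 := by omega
    rw [e1, e2, e3, e4, hd, pow_succ, pow_succ]
    ring
  rw [Finset.sum_congr rfl hstep,
    Finset.sum_range_sub (fun s => b^(i+s) * (b-1)^(k-(i+s))) (k-i)]
  have e5 : i + (k - i) = k := by omega
  simp [e5]

private lemma geo_formula (b x : ℝ) (hb : 1 < b) {i k : ℕ} (h1 : 1 ≤ i) (h2 : i ≤ k) :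
    ((b-1)/b)^(k-i) * (x / (1 - ((b-1)/b)^k) / b)
      = x * (b-1)^(k-i) * b^(i-1) / (b^k - (b-1)^k) := by
  have hb0 : (0:ℝ) < b := lt_trans one_pos hb
  have hb1 : (0:ℝ) < b - 1 := by linarith
  have hA : (0:ℝ) < b^k - (b-1)^k := by
    have := pow_lt_pow_left₀ (show b - 1 < b by linarith) hb1.le (show k ≠ 0 by omega)
    linarith
  have hD : 0 < 1 - ((b-1)/b)^k := by
    have : ((b-1)/b)^k < 1 := pow_lt_one₀ (by positivity) ((div_lt_one hb0).2 (by linarith)) (by omega)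
    linarith
  obtain ⟨n, rfl⟩ : ∃ n, i = n + 1 := ⟨i - 1, by omega⟩
  obtain ⟨d, rfl⟩ : ∃ d, k = n + 1 + d := ⟨k - (n+1), by omega⟩
  have e1 : n + 1 + d - (n + 1) = d := by omega
  have e2 : n + 1 - 1 = n := by omega
  rw [e1, e2] at *
  rw [div_pow, div_pow]
  rw [div_pow] at hD
  have hbk : (0:ℝ) < b ^ (n+1+d) := by positivity
  field_simp
  ring

private lemma formula_value (b x : ℝ) (hb : 1 < b) (k : ℕ) (hk : 1 ≤ k)
    (y : ℕ → ℝ)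
    (hf : ∀ i ∈ Icc 1 k, y i = x * (b-1)^(k-i) * b^(i-1) / (b^k - (b-1)^k))
    {i : ℕ} (hi : i ∈ Icc 1 k) :
    b * y i + ∑ j ∈ Icc (i+1) k, y j = x / (1 - ((b-1)/b)^k) := by
  have hb0 : (0:ℝ) < b := lt_trans one_pos hb
  have hb1 : (0:ℝ) < b - 1 := by linarith
  have hA : (0:ℝ) < b^k - (b-1)^k := by
    have := pow_lt_pow_left₀ (show b - 1 < b by linarith) hb1.le (show k ≠ 0 by omega)
    linarith
  have hD : 0 < 1 - ((b-1)/b)^k := by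
    have : ((b-1)/b)^k < 1 := pow_lt_one₀ (by positivity) ((div_lt_one hb0).2 (by linarith)) (by omega)
    linarith
  obtain ⟨hi1, hi2⟩ := mem_Icc.mp hi
  have hsum2 : ∑ j ∈ Icc (i+1) k, y j
      = ∑ j ∈ Icc (i+1) k, x * (b-1)^(k-j) * b^(j-1) / (b^k - (b-1)^k) := by
    refine Finset.sum_congr rfl fun j hj => ?_
    obtain ⟨hj1, hj2⟩ := mem_Icc.mp hj
    exact hf j (mem_Icc.mpr ⟨by omega, hj2⟩)
  have hsum3 : ∑ j ∈ Icc (i+1) k, x * (b-1)^(k-j) * b^(j-1) / (b^k - (b-1)^k)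
      = (b^k - b^i * (b-1)^(k-i)) * x / (b^k - (b-1)^k) := by
    rw [← telescope b hi2, Finset.sum_mul, Finset.sum_div]
    refine Finset.sum_congr rfl fun j _ => ?_
    ring
  rw [hsum2, hsum3, hf i hi]
  have hbi : b * b^(i-1) = b^i := by
    conv_rhs => rw [show i = (i-1)+1 by omega]
    rw [pow_succ]; ring
  have hx2 : x / (1 - ((b-1)/b)^k) = b^k * x / (b^k - (b-1)^k) := by
    rw [div_pow] at hD ⊢
    rw [div_eq_div_iff (by linarith) hA.ne']
    have hbk : (0:ℝ) < b^k := by positivity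
    field_simp
  rw [hx2]
  rw [mul_div_assoc', ← add_div, div_eq_div_iff hA.ne' hA.ne']
  linear_combination ((b-1)^(k-i) * x * (b^k - (b-1)^k)) * hbi

theorem stmt_3 (b x c : ℝ) (hb : 1 < b) (hx : 0 < x) (hc : 0 ≤ c)
    (k : ℕ) (hk : 1 ≤ k)
    (y : ℕ → ℝ) (hy : ∀ i ∈ Finset.Icc 1 k, 0 ≤ y i)
    (hsum : ∑ i ∈ Finset.Icc 1 k, y i = x) :
    (∃ i ∈ Finset.Icc 1 k,
      x / (1 - ((b - 1) / b) ^ k) + c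
        ≤ b * y i + (∑ j ∈ Finset.Icc (i + 1) k, y j) + c) ∧
    ((∀ i ∈ Finset.Icc 1 k,
        b * y i + (∑ j ∈ Finset.Icc (i + 1) k, y j) + c
          ≤ x / (1 - ((b - 1) / b) ^ k) + c)
      ↔ (∀ i ∈ Finset.Icc 1 k,
          y i = x * (b - 1) ^ (k - i) * b ^ (i - 1) / (b ^ k - (b - 1) ^ k))) := by
  have hb0 : (0:ℝ) < b := lt_trans one_pos hb
  have hb1 : (0:ℝ) < b - 1 := by linarith
  have hr0 : 0 < (b-1)/b := div_pos hb1 hb0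
  have hrk : ((b-1)/b)^k < 1 :=
    pow_lt_one₀ hr0.le ((div_lt_one hb0).2 (by linarith)) (by omega)
  have hD : 0 < 1 - ((b-1)/b)^k := by linarith
  have hne : (Icc 1 k).Nonempty := ⟨1, mem_Icc.mpr ⟨le_refl 1, hk⟩⟩
  have hg : ∀ i ∈ Icc 1 k, b * y i + ∑ j ∈ Icc (i+1) k, y j
      = (b-1) * y i + ∑ j ∈ Icc i k, y j := by
    intro i hi
    rw [icc_split y (mem_Icc.mp hi).2]; ring
  have hkey : ∑ i ∈ Icc 1 k, ((b-1)/b)^(i-1) * ((b-1)*y i + ∑ j ∈ Icc i k, y j)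
      = b * x := by rw [key_identity b hb, hsum]
  set B := x / (1 - ((b-1)/b)^k) with hBdef
  have hBsum : ∑ i ∈ Icc 1 k, ((b-1)/b)^(i-1) * B = b * x := by
    have hcan : (1 - ((b-1)/b)^k) * B = x := by
      rw [hBdef, mul_comm, div_mul_cancel₀ x hD.ne']
    rw [← Finset.sum_mul, wsum b hb k, mul_assoc, hcan]
  constructor
  · by_contra h
    push_neg at h
    have hlt : ∀ i ∈ Icc 1 k, ((b-1)/b)^(i-1) * ((b-1)*y i + ∑ j ∈ Icc i k, y j)
        < ((b-1)/b)^(i-1) * B := by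
      intro i hi
      have h1 := h i hi
      rw [hg i hi] at h1
      exact mul_lt_mul_of_pos_left (by linarith) (pow_pos hr0 _)
    have := Finset.sum_lt_sum_of_nonempty hne hlt
    rw [hkey, hBsum] at this
    exact lt_irrefl _ this
  constructor
  · intro hle
    have heq : ∀ i ∈ Icc 1 k, b * y i + ∑ j ∈ Icc (i+1) k, y j = B := by
      have hz : ∑ i ∈ Icc 1 k,
          ((b-1)/b)^(i-1) * (B - ((b-1)*y i + ∑ j ∈ Icc i k, y j)) = 0 := by
        simp only [mul_sub]
        rw [Finset.sum_sub_distrib, hkey, hBsum, sub_self]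
      have hnn : ∀ i ∈ Icc 1 k,
          0 ≤ ((b-1)/b)^(i-1) * (B - ((b-1)*y i + ∑ j ∈ Icc i k, y j)) := by
        intro i hi
        have h1 := hle i hi
        rw [hg i hi] at h1
        have : (b-1)*y i + ∑ j ∈ Icc i k, y j ≤ B := by linarith
        exact mul_nonneg (pow_pos hr0 _).le (by linarith)
      rw [Finset.sum_eq_zero_iff_of_nonneg hnn] at hz
      intro i hi
      have h2 := hz i hi
      have hw : ((b-1)/b)^(i-1) ≠ 0 := (pow_pos hr0 _).ne'
      rw [mul_eq_zero] at h2
      rcases h2 with h2 | h2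
      · exact absurd h2 hw
      · rw [hg i hi]; linarith
    have hyk : y k = B / b := by
      have h1 := heq k (mem_Icc.mpr ⟨hk, le_refl k⟩)
      rw [Finset.Icc_eq_empty (by omega), Finset.sum_empty] at h1
      rw [eq_div_iff hb0.ne']
      linarith
    have hstep : ∀ i, 1 ≤ i → i + 1 ≤ k → y i = ((b-1)/b) * y (i+1) := by
      intro i h1 h2
      have e1 := heq i (mem_Icc.mpr ⟨h1, by omega⟩)
      have e2 := heq (i+1) (mem_Icc.mpr ⟨by omega, h2⟩)
      rw [icc_split y h2] at e1
      rw [div_mul_eq_mul_div, eq_div_iff hb0.ne']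
      linarith
    have hgeo : ∀ d i, 1 ≤ i → i + d = k → y i = ((b-1)/b)^d * (B/b) := by
      intro d
      induction d with
      | zero =>
        intro i h1 h2
        simp only [pow_zero, one_mul]
        rw [show i = k from by omega, hyk]
      | succ d ih =>
        intro i h1 h2
        rw [hstep i h1 (by omega), ih (i+1) (by omega) (by omega), pow_succ]
        ring
    intro i hi
    obtain ⟨h1, h2⟩ := mem_Icc.mp hi
    rw [hgeo (k-i) i h1 (by omega), hBdef]
    exact geo_formula b x hb h1 h2
  · intro hf i hi
    rw [formula_value b x hb k hk y hf hi]
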